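/- For integers n, m, i, d with 0 ≤ i ≤ m ≤ n, define α_i(n,m,d) := ∑_{s=i}^{n+m} (-1)^s (m+n+1-s) · [∑_{k=0}^{s-i} C(n+2,k)·(-d)^{s-i-k}] · C(m+n-s, n-s+i), with the convention C(a,b) = 0 whenever b < 0 or b > a. Then for any integers c_0, c_1, …, c_m, any integer d, and all n ≥ m, one has ∑_{i=0}^m α_i(n,m,d)·c_i = (d-1)^{n-m} · ∑_{i=0}^m α_i(m,m,d)·c_i. (Taking c_i to be the degrees of the Chern–Mather classes of an m-dimensional projective variety X, this says the zeroth polar class satisfies δ_0(X × Y_n) = (d-1)^{n-m}·δ_0(X × Y_m) for smooth degree-d hypersurfaces Y_n ⊂ ℙ^{n+1}.) -/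

import Mathlib

open Finset

/-- The binomial coefficient `C(a,b)` for integers, with the convention that
`C(a,b) = 0` whenever `b < 0` or `b > a`. -/
def intChoose (a b : ℤ) : ℤ :=
  if 0 ≤ b ∧ b ≤ a then (a.toNat.choose b.toNat : ℤ) else 0

/-- The coefficient `α_i(n,m,d)` expressing the zeroth polar class of `X × Y_n` in terms of
the degrees of the Chern–Mather classes of `X`. -/
def alphaCoeff (n m i : ℕ) (d : ℤ) : ℤ :=
  ∑ s ∈ Finset.Icc i (n + m),
    (-1 : ℤ) ^ s * ((m : ℤ) + n + 1 - s) *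
      (∑ k ∈ Finset.range (s - i + 1), intChoose ((n : ℤ) + 2) k * (-d) ^ (s - i - k)) *
      intChoose ((m : ℤ) + n - s) ((n : ℤ) - s + i)

/-! ### Auxiliary development -/

/-- `Qc d a j` is the `j`-th coefficient of the power series `(1-x)^a / (1-dx)`. -/
def Qc (d : ℤ) (a j : ℕ) : ℤ :=
  ∑ k ∈ range (j + 1), (-1 : ℤ) ^ k * (a.choose k : ℤ) * d ^ (j - k)

lemma Qc_def (d : ℤ) (a j : ℕ) :
    Qc d a j = ∑ k ∈ range (j + 1), (-1 : ℤ) ^ k * (a.choose k : ℤ) * d ^ (j - k) := rfl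

lemma Qc_zero (d : ℤ) (a : ℕ) : Qc d a 0 = 1 := by simp [Qc]

lemma Qc_peel (d : ℤ) (b j : ℕ) :
    Qc d b (j + 1)
      = (∑ k ∈ range (j + 1), (-1 : ℤ) ^ (k + 1) * (b.choose (k + 1) : ℤ) * d ^ (j - k))
        + d ^ (j + 1) := by
  rw [Qc_def, Finset.sum_range_succ' (fun k => (-1 : ℤ) ^ k * (b.choose k : ℤ) * d ^ (j + 1 - k))]
  simp [Nat.succ_sub_succ]

lemma Qc_pascal (d : ℤ) (a j : ℕ) :
    Qc d (a + 1) (j + 1) = Qc d a (j + 1) - Qc d a j := by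
  rw [Qc_peel, Qc_peel]
  have h : ∀ k ∈ range (j + 1),
      (-1 : ℤ) ^ (k + 1) * (((a + 1).choose (k + 1)) : ℤ) * d ^ (j - k)
        = (-1 : ℤ) ^ (k + 1) * ((a.choose (k + 1)) : ℤ) * d ^ (j - k)
          + -((-1 : ℤ) ^ k * (a.choose k : ℤ) * d ^ (j - k)) := by
    intro k _
    rw [Nat.choose_succ_succ]
    push_cast
    ring
  rw [Finset.sum_congr rfl h, Finset.sum_add_distrib, Finset.sum_neg_distrib, ← Qc_def]
  ring

lemma sum_Qc (d : ℤ) (a N : ℕ) : ∑ j ∈ range (N + 1), Qc d (a + 1) j = Qc d a N := by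
  induction N with
  | zero => simp [Qc_zero]
  | succ N ih => rw [Finset.sum_range_succ, ih, Qc_pascal]; ring

lemma hockey (r M : ℕ) :
    (M + r + 1).choose (r + 1) = ∑ p ∈ range (M + 1), (p + r).choose r := by
  induction M with
  | zero => simp
  | succ M ih =>
    rw [Finset.sum_range_succ, ← ih,
      show M + 1 + r + 1 = (M + r + 1) + 1 by omega, Nat.choose_succ_succ,
      show M + 1 + r = M + r + 1 by omega]
    exact Nat.add_comm _ _

lemma tri (f : ℕ → ℕ → ℤ) (N : ℕ) :
    ∑ j ∈ range (N + 1), ∑ p ∈ range (N - j + 1), f j p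
      = ∑ q ∈ range (N + 1), ∑ j ∈ range (q + 1), f j (q - j) := by
  induction N with
  | zero => simp
  | succ N ih =>
    have hL : (∑ j ∈ range (N + 1 + 1), ∑ p ∈ range (N + 1 - j + 1), f j p)
        = (∑ j ∈ range (N + 1), ∑ p ∈ range (N - j + 1), f j p)
          + ((∑ j ∈ range (N + 1), f j (N + 1 - j)) + f (N + 1) 0) := by
      rw [Finset.sum_range_succ (fun j => ∑ p ∈ range (N + 1 - j + 1), f j p) (N + 1)]
      have h1 : ∀ j ∈ range (N + 1), ∑ p ∈ range (N + 1 - j + 1), f j p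
          = ∑ p ∈ range (N - j + 1), f j p + f j (N + 1 - j) := by
        intro j hj
        have hj' : j ≤ N := Nat.lt_succ_iff.mp (Finset.mem_range.mp hj)
        rw [show N + 1 - j + 1 = (N - j + 1) + 1 by omega, Finset.sum_range_succ,
          show N - j + 1 = N + 1 - j by omega]
      rw [Finset.sum_congr rfl h1, Finset.sum_add_distrib]
      have hC : ∑ p ∈ range (N + 1 - (N + 1) + 1), f (N + 1) p = f (N + 1) 0 := by simp
      rw [hC, add_assoc]
    have hR : (∑ q ∈ range (N + 1 + 1), ∑ j ∈ range (q + 1), f j (q - j))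
        = (∑ q ∈ range (N + 1), ∑ j ∈ range (q + 1), f j (q - j))
          + ((∑ j ∈ range (N + 1), f j (N + 1 - j)) + f (N + 1) 0) := by
      rw [Finset.sum_range_succ (fun q => ∑ j ∈ range (q + 1), f j (q - j)) (N + 1),
        Finset.sum_range_succ (fun j => f j (N + 1 - j)) (N + 1), Nat.sub_self]
    rw [hL, hR, ih]

lemma Hsum (d : ℤ) : ∀ r a N : ℕ, r < a →
    ∑ j ∈ range (N + 1), Qc d a j * (((N - j + r).choose r : ℕ) : ℤ)
      = Qc d (a - (r + 1)) N := by
  intro r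
  induction r with
  | zero =>
    intro a N ha
    simp only [Nat.choose_zero_right, Nat.cast_one, mul_one]
    obtain ⟨b, rfl⟩ : ∃ b, a = b + 1 := ⟨a - 1, by omega⟩
    simpa using sum_Qc d b N
  | succ r ih =>
    intro a N ha
    have step : ∀ j ∈ range (N + 1),
        Qc d a j * (((N - j + (r + 1)).choose (r + 1) : ℕ) : ℤ)
          = ∑ p ∈ range (N - j + 1), Qc d a j * (((p + r).choose r : ℕ) : ℤ) := by
      intro j _
      rw [show N - j + (r + 1) = N - j + r + 1 by omega, hockey r (N - j)]
      push_cast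
      rw [Finset.mul_sum]
    rw [Finset.sum_congr rfl step,
      tri (fun j p => Qc d a j * (((p + r).choose r : ℕ) : ℤ)) N]
    have inner : ∀ q ∈ range (N + 1),
        ∑ j ∈ range (q + 1), Qc d a j * (((q - j + r).choose r : ℕ) : ℤ)
          = Qc d (a - (r + 1)) q := fun q _ => ih a q (by omega)
    rw [Finset.sum_congr rfl inner]
    have e : a - (r + 1) = (a - (r + 1 + 1)) + 1 := by omega
    rw [e, sum_Qc]

lemma Qc_eval (d : ℤ) (b N : ℕ) (h : b ≤ N) :
    Qc d b N = d ^ (N - b) * (d - 1) ^ b := by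
  have expand : (d - 1 : ℤ) ^ b
      = ∑ k ∈ range (b + 1), (-1 : ℤ) ^ k * (b.choose k : ℤ) * d ^ (b - k) := by
    rw [sub_eq_add_neg, add_pow,
      ← Finset.sum_range_reflect (fun k => (-1 : ℤ) ^ k * (b.choose k : ℤ) * d ^ (b - k)) (b + 1)]
    apply Finset.sum_congr rfl
    intro k hk
    have hk' : k ≤ b := Nat.lt_succ_iff.mp (Finset.mem_range.mp hk)
    have e1 : b + 1 - 1 - k = b - k := by omega
    have e2 : b - (b - k) = k := by omega
    have e3 : (b.choose (b - k) : ℤ) = (b.choose k : ℤ) := by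
      rw [Nat.choose_symm hk']
    rw [e1, e2, e3]
    ring
  rw [Qc_def]
  rw [← Finset.sum_subset (Finset.range_subset_range.2 (by omega : b + 1 ≤ N + 1))]
  · have term : ∀ k ∈ range (b + 1),
        (-1 : ℤ) ^ k * (b.choose k : ℤ) * d ^ (N - k)
          = d ^ (N - b) * ((-1 : ℤ) ^ k * (b.choose k : ℤ) * d ^ (b - k)) := by
      intro k hk
      have hk' : k ≤ b := Nat.lt_succ_iff.mp (Finset.mem_range.mp hk)
      rw [show N - k = (N - b) + (b - k) by omega, pow_add]
      ring
    rw [Finset.sum_congr rfl term, ← Finset.mul_sum, ← expand]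
  · intro k _ hk
    have : b < k := by
      by_contra hc
      exact hk (Finset.mem_range.mpr (by omega))
    simp [Nat.choose_eq_zero_of_lt this]

lemma intChoose_coe (a b : ℕ) : intChoose (a : ℤ) (b : ℤ) = (a.choose b : ℤ) := by
  rw [intChoose]
  by_cases h : b ≤ a
  · rw [if_pos ⟨Int.natCast_nonneg b, by exact_mod_cast h⟩]
    simp
  · rw [if_neg (by omega), Nat.choose_eq_zero_of_lt (by omega)]
    simp

lemma P_eq (d : ℤ) (a j : ℕ) :
    ∑ k ∈ range (j + 1), (a.choose k : ℤ) * (-d) ^ (j - k) = (-1 : ℤ) ^ j * Qc d a j := by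
  rw [Qc_def, Finset.mul_sum]
  apply Finset.sum_congr rfl
  intro k hk
  have hk' : k ≤ j := Nat.lt_succ_iff.mp (Finset.mem_range.mp hk)
  rw [neg_pow]
  have hpow : (-1 : ℤ) ^ (j - k) = (-1 : ℤ) ^ j * (-1 : ℤ) ^ k := by
    rw [← pow_add, show j + k = (j - k) + 2 * k by omega, pow_add, pow_mul]
    simp
  rw [hpow]
  ring

lemma alpha_closed (n m i : ℕ) (d : ℤ) (him : i ≤ m) (hmn : m ≤ n) :
    alphaCoeff n m i d
      = (-1 : ℤ) ^ i * ((m - i : ℕ) + 1 : ℤ) * d ^ (m - i) * (d - 1) ^ (n - (m - i)) := by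
  set t := m - i with ht
  unfold alphaCoeff
  rw [show Finset.Icc i (n + m) = Finset.Ico i (n + m + 1) by rw [Finset.Ico_add_one_right_eq_Icc]]
  rw [Finset.sum_Ico_eq_sum_range]
  have hsub : range (n + 1) ⊆ range (n + m + 1 - i) := Finset.range_subset_range.2 (by omega)
  rw [← Finset.sum_subset hsub]
  · have term : ∀ j ∈ range (n + 1),
        (-1 : ℤ) ^ (i + j) * ((m : ℤ) + n + 1 - ((i + j : ℕ) : ℤ)) *
          (∑ k ∈ range ((i + j) - i + 1), intChoose ((n : ℤ) + 2) k * (-d) ^ ((i + j) - i - k)) *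
          intChoose ((m : ℤ) + n - ((i + j : ℕ) : ℤ)) ((n : ℤ) - ((i + j : ℕ) : ℤ) + i)
        = (-1 : ℤ) ^ i * ((t : ℤ) + 1) *
            (Qc d (n + 2) j * (((n - j + (t + 1)).choose (t + 1) : ℕ) : ℤ)) := by
      intro j hj
      have hjn : j ≤ n := Nat.lt_succ_iff.mp (Finset.mem_range.mp hj)
      have e1 : (i + j) - i = j := by omega
      rw [e1]
      have e2 : ((n : ℤ) + 2) = ((n + 2 : ℕ) : ℤ) := by push_cast; ring
      have inner : (∑ k ∈ range (j + 1), intChoose ((n : ℤ) + 2) k * (-d) ^ (j - k))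
          = (-1 : ℤ) ^ j * Qc d (n + 2) j := by
        rw [← P_eq d (n + 2) j]
        apply Finset.sum_congr rfl
        intro k _
        rw [e2, intChoose_coe]
      rw [inner]
      have e4 : (m : ℤ) + n - ((i + j : ℕ) : ℤ) = ((t + (n - j) : ℕ) : ℤ) := by
        push_cast; omega
      have e5 : (n : ℤ) - ((i + j : ℕ) : ℤ) + i = ((n - j : ℕ) : ℤ) := by
        push_cast; omega
      rw [e4, e5, intChoose_coe]
      have e6 : (t + (n - j)).choose (n - j) = (t + (n - j)).choose t := by
        rw [← Nat.choose_symm (Nat.le_add_right t (n - j)), Nat.add_sub_cancel_left]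
      have e7 : ((m : ℤ) + n + 1 - ((i + j : ℕ) : ℤ)) = ((t + (n - j) + 1 : ℕ) : ℤ) := by
        push_cast; omega
      rw [e7, e6]
      have key : ((t + (n - j) + 1 : ℕ) : ℤ) * ((t + (n - j)).choose t : ℤ)
          = ((t : ℤ) + 1) * (((n - j + (t + 1)).choose (t + 1) : ℕ) : ℤ) := by
        have hnat := Nat.add_one_mul_choose_eq (t + (n - j)) t
        have e8 : n - j + (t + 1) = (t + (n - j)) + 1 := by omega
        rw [e8]
        have : (t + (n - j) + 1) * (t + (n - j)).choose t
            = (t + 1) * (t + (n - j) + 1).choose (t + 1) := by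
          rw [hnat]
          exact Nat.mul_comm _ _
        exact_mod_cast this
      have sgn : (-1 : ℤ) ^ (i + j) * (-1 : ℤ) ^ j = (-1 : ℤ) ^ i := by
        rw [← pow_add, show i + j + j = i + 2 * j by omega, pow_add, pow_mul]
        simp
      calc (-1 : ℤ) ^ (i + j) * ((t + (n - j) + 1 : ℕ) : ℤ) *
              ((-1 : ℤ) ^ j * Qc d (n + 2) j) * ((t + (n - j)).choose t : ℤ)
          = ((-1 : ℤ) ^ (i + j) * (-1 : ℤ) ^ j) *
              (((t + (n - j) + 1 : ℕ) : ℤ) * ((t + (n - j)).choose t : ℤ)) *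
              Qc d (n + 2) j := by push_cast; ring
        _ = (-1 : ℤ) ^ i * ((t : ℤ) + 1) *
              (Qc d (n + 2) j * (((n - j + (t + 1)).choose (t + 1) : ℕ) : ℤ)) := by
            rw [sgn, key]; ring
    rw [Finset.sum_congr rfl term, ← Finset.mul_sum,
      Hsum d (t + 1) (n + 2) n (by omega)]
    have e9 : n + 2 - (t + 1 + 1) = n - t := by omega
    rw [e9, Qc_eval d (n - t) n (by omega), show n - (n - t) = t by omega]
    ring
  · intro j hj hj'
    have hjn : n < j := by
      have := Finset.mem_range.mp hj
      by_contra hc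
      exact hj' (Finset.mem_range.mpr (by omega))
    have hneg : ¬(0 ≤ (n : ℤ) - ((i + j : ℕ) : ℤ) + i ∧
        (n : ℤ) - ((i + j : ℕ) : ℤ) + i ≤ (m : ℤ) + n - ((i + j : ℕ) : ℤ)) := by
      push_cast
      omega
    rw [intChoose, if_neg hneg, mul_zero]

/-- **Stabilization of the zeroth polar class of `X × Y_n`.** For any integers
`c_0,…,c_m` (e.g. the degrees of the Chern–Mather classes of an `m`-dimensional projective
variety `X`), any integer `d`, and all `n ≥ m`:
`∑_{i=0}^m α_i(n,m,d)·c_i = (d-1)^{n-m} · ∑_{i=0}^m α_i(m,m,d)·c_i`. -/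
theorem polar_class_stabilization (n m : ℕ) (d : ℤ) (c : ℕ → ℤ) (hmn : m ≤ n) :
    ∑ i ∈ Finset.range (m + 1), alphaCoeff n m i d * c i
      = (d - 1) ^ (n - m) * ∑ i ∈ Finset.range (m + 1), alphaCoeff m m i d * c i := by
  rw [Finset.mul_sum]
  apply Finset.sum_congr rfl
  intro i hi
  have him : i ≤ m := Nat.lt_succ_iff.mp (Finset.mem_range.mp hi)
  rw [alpha_closed n m i d him hmn, alpha_closed m m i d him le_rfl]
  rw [show m - (m - i) = i by omega, show n - (m - i) = (n - m) + i by omega, pow_add]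
  ring
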